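/- (a) yGy(n) is generated by Gy(n) together with y_0^{−1} (equivalently, by Gy(n) and y_0); (b) the conjugate subgroup y_0 Gy(n) y_0^{−1} is a proper subgroup of Gy(n); and (c) the natural homomorphism from the HNN extension ⟨Gy(n), t | t^{−1} h t = y_0 h y_0^{−1} (h ∈ Gy(n))⟩ to yGy(n), restricting to the identity on Gy(n) and sending the stable letter t to y_0^{−1}, is an isomorphism. In other words, yGy(n) has a strictly ascending HNN decomposition yGy(n) ≅ (Gy(n)) *_{y_0^{−1}}. -/
import Mathlib


namespace LM

/-- Group structure on the self-homeomorphisms of a space, with the convention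
`(f * g) ξ = f (g ξ)`.  A product `f₁ f₂ ⋯ f_k` in the paper's convention
(`fg = g ∘ f`) corresponds to `f_k * ⋯ * f₂ * f₁` here. -/
instance homeoGroup {X : Type*} [TopologicalSpace X] : Group (X ≃ₜ X) where
  mul f g := g.trans f
  one := Homeomorph.refl X
  inv := Homeomorph.symm
  mul_assoc _ _ _ := Homeomorph.ext fun _ => rfl
  one_mul _ := Homeomorph.ext fun _ => rfl
  mul_one _ := Homeomorph.ext fun _ => rfl
  inv_mul_cancel f := Homeomorph.ext fun x => f.symm_apply_apply x

/-- The `n`-adic Cantor set `{0, …, n-1}^ℕ` with the product topology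
(`Fin n` being discrete). -/
abbrev C (n : ℕ) : Type := ℕ → Fin n

/-- The group of self-homeomorphisms of the `n`-adic Cantor set. -/
abbrev Γ (n : ℕ) : Type := C n ≃ₜ C n

/-- Prepend a letter to an infinite sequence. -/
def cons {n : ℕ} (a : Fin n) (s : C n) : C n
  | 0 => a
  | i + 1 => s i

/-- Prepend a finite word to an infinite sequence. -/
def wcons {n : ℕ} (w : List (Fin n)) (s : C n) : C n := w.foldr cons s

/-- The sum of the letters of a finite word. -/
def dsum {n : ℕ} (w : List (Fin n)) : ℕ := (w.map Fin.val).sum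

/-- `f` acts as `core` after the prefix `α` and fixes every sequence not beginning
with `α`. -/
def IsPrefixMap {n : ℕ} (α : List (Fin n)) (core : Γ n) (f : Γ n) : Prop :=
  (∀ η, f (wcons α η) = wcons α (core η)) ∧
  (∀ ξ : C n, (∀ η, ξ ≠ wcons α η) → f ξ = ξ)

/-- The defining equations of the generator `x₀` of the Brown–Thompson group `F(n)`. -/
def IsX0 (n : ℕ) (hn : 2 ≤ n) (f : Γ n) : Prop :=
  (∀ k : Fin n, (k : ℕ) ≤ n - 2 → ∀ η,
    f (cons ⟨0, by omega⟩ (cons k η)) = cons k η) ∧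
  (∀ η, f (cons ⟨0, by omega⟩ (cons ⟨n - 1, by omega⟩ η)) =
    cons ⟨n - 1, by omega⟩ (cons ⟨0, by omega⟩ η)) ∧
  (∀ k : Fin n, 1 ≤ (k : ℕ) → (k : ℕ) ≤ n - 2 → ∀ η,
    f (cons k η) = cons ⟨n - 1, by omega⟩ (cons k η)) ∧
  (∀ η, f (cons ⟨n - 1, by omega⟩ η) =
    cons ⟨n - 1, by omega⟩ (cons ⟨n - 1, by omega⟩ η))

/-- The defining equations of the generator `x_j`, `1 ≤ j ≤ n - 2`. -/
def IsXMid (n : ℕ) (hn : 2 ≤ n) (j : Fin n) (f : Γ n) : Prop :=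
  (∀ k : Fin n, (k : ℕ) < (j : ℕ) → ∀ η, f (cons k η) = cons k η) ∧
  (∀ k m : Fin n, (m : ℕ) = (j : ℕ) + (k : ℕ) → (j : ℕ) + (k : ℕ) ≤ n - 2 → ∀ η,
    f (cons j (cons k η)) = cons m η) ∧
  (∀ k m : Fin n, n - 1 ≤ (j : ℕ) + (k : ℕ) → (m : ℕ) = (j : ℕ) + (k : ℕ) - (n - 1) → ∀ η,
    f (cons j (cons k η)) = cons ⟨n - 1, by omega⟩ (cons m η)) ∧
  (∀ k : Fin n, (j : ℕ) < (k : ℕ) → (k : ℕ) ≤ n - 2 → ∀ η,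
    f (cons k η) = cons ⟨n - 1, by omega⟩ (cons k η)) ∧
  (∀ η, f (cons ⟨n - 1, by omega⟩ η) =
    cons ⟨n - 1, by omega⟩ (cons ⟨n - 1, by omega⟩ η))

/-- The defining equations of the generator `x_{n-1}` (in terms of `x₀`). -/
def IsXLast (n : ℕ) (hn : 2 ≤ n) (x0 f : Γ n) : Prop :=
  (∀ k : Fin n, (k : ℕ) ≤ n - 2 → ∀ η, f (cons k η) = cons k η) ∧
  (∀ η, f (cons ⟨n - 1, by omega⟩ η) = cons ⟨n - 1, by omega⟩ (x0 η))

/-- `x` is the family `x₀, …, x_{n-1}` of generators of the Brown–Thompson group. -/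
def IsXFamily (n : ℕ) (hn : 2 ≤ n) (x : Fin n → Γ n) : Prop :=
  IsX0 n hn (x ⟨0, by omega⟩) ∧
  (∀ j : Fin n, 1 ≤ (j : ℕ) → (j : ℕ) ≤ n - 2 → IsXMid n hn j (x j)) ∧
  IsXLast n hn (x ⟨0, by omega⟩) (x ⟨n - 1, by omega⟩)

/-- The defining (co)recursive equations of the map `y`. -/
def IsY (n : ℕ) (hn : 2 ≤ n) (f : Γ n) : Prop :=
  (∀ ζ, f (cons ⟨0, by omega⟩ (cons ⟨0, by omega⟩ ζ)) = cons ⟨0, by omega⟩ (f ζ)) ∧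
  (∀ k : Fin n, 1 ≤ (k : ℕ) → (k : ℕ) ≤ n - 2 → ∀ ζ,
    f (cons ⟨0, by omega⟩ (cons k ζ)) = cons k ζ) ∧
  (∀ k : Fin n, 1 ≤ (k : ℕ) → (k : ℕ) ≤ n - 2 → ∀ ζ,
    f (cons k ζ) = cons ⟨n - 1, by omega⟩ (cons k ζ)) ∧
  (∀ ζ, f (cons ⟨0, by omega⟩ (cons ⟨n - 1, by omega⟩ ζ)) =
    cons ⟨n - 1, by omega⟩ (cons ⟨0, by omega⟩ (f⁻¹ ζ))) ∧
  (∀ ζ, f (cons ⟨n - 1, by omega⟩ ζ) =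
    cons ⟨n - 1, by omega⟩ (cons ⟨n - 1, by omega⟩ (f ζ)))


section Aux
variable {n : ℕ}

variable {n : ℕ}

@[simp] theorem mul_apply (f g : Γ n) (ξ : C n) : (f * g) ξ = f (g ξ) := rfl
@[simp] theorem one_apply (ξ : C n) : (1 : Γ n) ξ = ξ := rfl
@[simp] theorem inv_apply_apply (f : Γ n) (ξ : C n) : f⁻¹ (f ξ) = ξ := f.symm_apply_apply ξ
@[simp] theorem apply_inv_apply (f : Γ n) (ξ : C n) : f (f⁻¹ ξ) = ξ := f.apply_symm_apply ξ

theorem inv_apply_eq_iff {f : Γ n} {ξ σ : C n} (h : f σ = ξ) : f⁻¹ ξ = σ := by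
  rw [← h]; exact f.symm_apply_apply σ

@[simp] theorem cons_zero (a : Fin n) (s : C n) : cons a s 0 = a := rfl
@[simp] theorem cons_succ (a : Fin n) (s : C n) (i : ℕ) : cons a s (i + 1) = s i := rfl

theorem eta (ξ : C n) : ξ = cons (ξ 0) fun i => ξ (i + 1) := by
  funext i; cases i <;> rfl

theorem cons_eq_cons {a b : Fin n} {s t : C n} : cons a s = cons b t ↔ a = b ∧ s = t := by
  constructor
  · intro h
    refine ⟨congrFun h 0, funext fun i => congrFun h (i + 1)⟩
  · rintro ⟨rfl, rfl⟩; rfl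

theorem cons_ne {a b : Fin n} (h : a ≠ b) (s t : C n) : cons a s ≠ cons b t := by
  intro hc; exact h (cons_eq_cons.mp hc).1

@[simp] theorem wcons_one (a : Fin n) (s : C n) : wcons [a] s = cons a s := rfl
@[simp] theorem wcons_two (a b : Fin n) (s : C n) : wcons [a, b] s = cons a (cons b s) := rfl
@[simp] theorem wcons_three (a b c : Fin n) (s : C n) :
    wcons [a, b, c] s = cons a (cons b (cons c s)) := rfl

-- prefix-map helpers
theorem pm_apply {α : List (Fin n)} {c f : Γ n} (h : IsPrefixMap α c f) (η : C n) :
    f (wcons α η) = wcons α (c η) := h.1 η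

theorem pm_inv {α : List (Fin n)} {c f : Γ n} (h : IsPrefixMap α c f) :
    IsPrefixMap α c⁻¹ f⁻¹ := by
  constructor
  · intro η
    exact inv_apply_eq_iff (by rw [h.1 (c⁻¹ η), apply_inv_apply])
  · intro ξ hξ
    exact inv_apply_eq_iff (h.2 ξ hξ)

theorem pm1_fix {a : Fin n} {c f : Γ n} (h : IsPrefixMap [a] c f) {b : Fin n} (hb : b ≠ a)
    (σ : C n) : f (cons b σ) = cons b σ :=
  h.2 _ (fun η => by simpa using cons_ne hb σ η)

theorem pm1_intro {a : Fin n} {c f : Γ n}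
    (h1 : ∀ η, f (cons a η) = cons a (c η))
    (h2 : ∀ b : Fin n, b ≠ a → ∀ σ, f (cons b σ) = cons b σ) : IsPrefixMap [a] c f := by
  constructor
  · simpa using h1
  · intro ξ hξ
    rw [eta ξ]
    refine h2 _ (fun hc => ?_) _
    exact hξ (fun i => ξ (i + 1)) (by rw [wcons_one, ← hc, ← eta])

theorem pm2_apply {a b : Fin n} {c f : Γ n} (h : IsPrefixMap [a, b] c f) (η : C n) :
    f (cons a (cons b η)) = cons a (cons b (c η)) := by simpa using h.1 η

theorem pm2_fix1 {a b : Fin n} {c f : Γ n} (h : IsPrefixMap [a, b] c f) {d : Fin n} (hd : d ≠ a)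
    (σ : C n) : f (cons d σ) = cons d σ :=
  h.2 _ (fun η => by simpa using cons_ne hd σ (cons b η))

theorem pm2_fix2 {a b : Fin n} {c f : Γ n} (h : IsPrefixMap [a, b] c f) {d : Fin n} (hd : d ≠ b)
    (σ : C n) : f (cons a (cons d σ)) = cons a (cons d σ) := by
  refine h.2 _ (fun η hc => ?_)
  rw [wcons_two, cons_eq_cons] at hc
  exact cons_ne hd σ η hc.2

theorem pm3_apply {a b c : Fin n} {co f : Γ n} (h : IsPrefixMap [a, b, c] co f) (η : C n) :
    f (cons a (cons b (cons c η))) = cons a (cons b (cons c (co η))) := by simpa using h.1 η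

theorem pm3_fix1 {a b c : Fin n} {co f : Γ n} (h : IsPrefixMap [a, b, c] co f) {d : Fin n}
    (hd : d ≠ a) (σ : C n) : f (cons d σ) = cons d σ :=
  h.2 _ (fun η => by simpa using cons_ne hd σ (cons b (cons c η)))

theorem pm3_fix2 {a b c : Fin n} {co f : Γ n} (h : IsPrefixMap [a, b, c] co f) {d : Fin n}
    (hd : d ≠ b) (σ : C n) : f (cons a (cons d σ)) = cons a (cons d σ) := by
  refine h.2 _ (fun η hc => ?_)
  rw [wcons_three, cons_eq_cons] at hc
  exact cons_ne hd σ (cons c η) hc.2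

theorem pm3_fix3 {a b c : Fin n} {co f : Γ n} (h : IsPrefixMap [a, b, c] co f) {d : Fin n}
    (hd : d ≠ c) (σ : C n) : f (cons a (cons b (cons d σ))) = cons a (cons b (cons d σ)) := by
  refine h.2 _ (fun η hc => ?_)
  rw [wcons_three, cons_eq_cons] at hc
  have := hc.2
  rw [cons_eq_cons] at this
  exact cons_ne hd σ η this.2

theorem pm_conj {δ γ : List (Fin n)} {f Y co : Γ n}
    (hf : ∀ η, f (wcons δ η) = wcons γ η) (hY : IsPrefixMap γ co Y) :
    IsPrefixMap δ co (f⁻¹ * Y * f) := by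
  have hfi : ∀ η, f⁻¹ (wcons γ η) = wcons δ η := fun η => inv_apply_eq_iff (hf η)
  constructor
  · intro η
    rw [wcons] at *
    show f⁻¹ (Y (f (wcons δ η))) = _
    rw [hf, hY.1, hfi]
  · intro ξ hξ
    show f⁻¹ (Y (f ξ)) = ξ
    have : ∀ η, f ξ ≠ wcons γ η := by
      intro η hc
      exact hξ η (by rw [← hfi η, ← hc, inv_apply_apply])
    rw [hY.2 _ this, inv_apply_apply]


variable (hn : 2 ≤ n)


@[reducible] def Zl : Fin n := ⟨0, by omega⟩
@[reducible] def El : Fin n := ⟨n - 1, by omega⟩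

theorem Zl_ne_El : Zl hn ≠ El hn := by
  simp only [Zl, El, ne_eq, Fin.mk.injEq]; omega

theorem El_ne_Zl : El hn ≠ Zl hn := (Zl_ne_El hn).symm

/-- block of `k` zeros, then `s`. -/
def zb (k : ℕ) (s : C n) : C n := fun i => if i < k then Zl hn else s (i - k)

@[simp] theorem zb_zero (s : C n) : zb hn 0 s = s := by
  funext i; simp [zb]

theorem zb_succ (k : ℕ) (s : C n) : zb hn (k + 1) s = cons (Zl hn) (zb hn k s) := by
  funext i
  cases i with
  | zero => simp [zb]
  | succ j =>
    simp only [zb, cons_succ]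
    by_cases h : j < k
    · rw [if_pos h, if_pos (by omega)]
    · rw [if_neg h, if_neg (by omega), Nat.succ_sub_succ]

theorem zb_add (a b : ℕ) (s : C n) : zb hn (a + b) s = zb hn a (zb hn b s) := by
  funext i
  simp only [zb]
  by_cases h1 : i < a
  · rw [if_pos h1, if_pos (show i < a + b by omega)]
  · rw [if_neg h1]
    by_cases h2 : i - a < b
    · rw [if_pos h2, if_pos (show i < a + b by omega)]
    · rw [if_neg h2, if_neg (show ¬ i < a + b by omega)]
      congr 1; omega

def nuC : C n := fun _ => El hn

theorem cons_nu : cons (El hn) (nuC hn) = nuC hn := by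
  funext i; cases i <;> rfl

def muC : C n := cons (El hn) (cons (Zl hn) (nuC hn))

theorem zb_nu_inj {a b : ℕ} (h : zb hn a (nuC hn) = zb hn b (nuC hn)) : a = b := by
  by_contra hne
  rcases lt_or_gt_of_ne hne with hab | hab
  · have := congrFun h a
    simp only [zb, if_neg (lt_irrefl a), if_pos hab] at this
    exact El_ne_Zl hn (by simpa [nuC] using this)
  · have := congrFun h b
    simp only [zb, if_neg (lt_irrefl b), if_pos hab] at this
    exact Zl_ne_El hn (by simpa [nuC] using this)

theorem zb_mu_ne_zb_nu (a b : ℕ) : zb hn a (muC hn) ≠ zb hn b (nuC hn) := by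
  intro h
  have h1 := congrFun h a
  have h2 := congrFun h (a + 1)
  simp only [zb, if_neg (lt_irrefl a), Nat.sub_self] at h1
  have hb : ¬ a < b := by
    intro hab
    rw [if_pos hab] at h1
    exact El_ne_Zl hn h1
  simp only [zb, if_neg (show ¬ a + 1 < a by omega), if_neg (show ¬ a + 1 < b by omega),
    show a + 1 - a = 1 from by omega] at h2
  exact Zl_ne_El hn (by simpa [muC, nuC] using h2)

/-- The subgroup of homeomorphisms acting as a shift on a neighbourhood of `0^∞`. -/
def Ssub : Subgroup (Γ n) where
  carrier := {g | ∃ k l : ℕ, ∀ η, g (zb hn k η) = zb hn l η}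
  one_mem' := ⟨0, 0, fun _ => rfl⟩
  mul_mem' := by
    rintro f g ⟨kf, lf, h1⟩ ⟨kg, lg, h2⟩
    refine ⟨kg + kf, lf + lg, fun η => ?_⟩
    rw [mul_apply, zb_add, h2, ← zb_add, Nat.add_comm lg kf, zb_add, h1, ← zb_add]
  inv_mem' := by
    rintro g ⟨k, l, h⟩
    exact ⟨l, k, fun η => inv_apply_eq_iff (h η)⟩

theorem mem_Ssub {g : Γ n} :
    g ∈ Ssub hn ↔ ∃ k l : ℕ, ∀ η, g (zb hn k η) = zb hn l η := Iff.rfl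

-- core `y` computations
variable {ycore : Γ n}

theorem y_nu (hy : IsY n hn ycore) : ycore (nuC hn) = nuC hn := by
  have e1 := hy.2.2.2.2 (nuC hn)
  rw [show cons ⟨n - 1, by omega⟩ (nuC hn) = nuC hn from cons_nu hn] at e1
  funext i
  induction i using Nat.strong_induction_on with
  | _ i ih =>
    match i with
    | 0 => rw [e1]; rfl
    | 1 => rw [e1]; rfl
    | (j + 2) =>
      rw [e1]
      show ycore (nuC hn) j = nuC hn (j + 2)
      rw [ih j (by omega)]; rfl

theorem yinv_nu (hy : IsY n hn ycore) : ycore⁻¹ (nuC hn) = nuC hn :=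
  inv_apply_eq_iff (y_nu hn hy)

theorem y_zb_even (hy : IsY n hn ycore) :
    ∀ j, ycore (zb hn (2 * j) (nuC hn)) = zb hn j (nuC hn) := by
  intro j
  induction j with
  | zero => simpa using y_nu hn hy
  | succ j ih =>
    have h2 : 2 * (j + 1) = (2 * j + 1) + 1 := by omega
    rw [h2, zb_succ, zb_succ, hy.1, ih, zb_succ]

theorem yinv_zb_even (hy : IsY n hn ycore) (j : ℕ) :
    ycore⁻¹ (zb hn j (nuC hn)) = zb hn (2 * j) (nuC hn) :=
  inv_apply_eq_iff (y_zb_even hn hy j)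

theorem y_zb_odd (hy : IsY n hn ycore) :
    ∀ i, ycore (zb hn (2 * i + 1) (nuC hn)) = zb hn i (muC hn) := by
  intro i
  induction i with
  | zero =>
    have h1 : zb hn (2 * 0 + 1) (nuC hn) = cons (Zl hn) (cons (El hn) (nuC hn)) := by
      rw [show 2 * 0 + 1 = 0 + 1 from rfl, zb_succ, zb_zero, cons_nu]
    rw [h1]
    show ycore (cons ⟨0, by omega⟩ (cons ⟨n - 1, by omega⟩ (nuC hn))) = zb hn 0 (muC hn)
    rw [hy.2.2.2.1, yinv_nu hn hy, zb_zero]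
    rfl
  | succ i ih =>
    have h2 : 2 * (i + 1) + 1 = (2 * i + 1) + 1 + 1 := by omega
    rw [h2, zb_succ, zb_succ, hy.1, ih, zb_succ]

theorem ypow_zb (hy : IsY n hn ycore) :
    ∀ (d j : ℕ), (ycore ^ d) (zb hn (2 ^ d * j) (nuC hn)) = zb hn j (nuC hn) := by
  intro d
  induction d with
  | zero => intro j; simp
  | succ d ih =>
    intro j
    have h2 : 2 ^ (d + 1) * j = 2 * (2 ^ d * j) := by ring
    rw [h2, pow_succ, mul_apply, y_zb_even hn hy, ih]


end Aux

section Aux3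
variable {n : ℕ} (hn : 2 ≤ n)

theorem exists_cons (ξ : C n) : ∃ a σ, ξ = cons a σ := ⟨ξ 0, fun i => ξ (i + 1), eta ξ⟩

theorem fin_cases3 (a : Fin n) :
    a = Zl hn ∨ (1 ≤ (a : ℕ) ∧ (a : ℕ) ≤ n - 2) ∨ a = El hn := by
  rcases eq_or_ne (a : ℕ) 0 with h | h
  · exact Or.inl (Fin.ext h)
  · rcases eq_or_ne (a : ℕ) (n - 1) with h2 | h2
    · exact Or.inr (Or.inr (Fin.ext h2))
    · have := a.isLt
      exact Or.inr (Or.inl ⟨by omega, by omega⟩)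

theorem fin_cases2 (a : Fin n) : (a : ℕ) ≤ n - 2 ∨ a = El hn := by
  rcases eq_or_ne (a : ℕ) (n - 1) with h2 | h2
  · exact Or.inr (Fin.ext h2)
  · have := a.isLt
    exact Or.inl (by omega)

theorem Zl_val : (Zl hn : ℕ) = 0 := rfl
theorem El_val : (El hn : ℕ) = n - 1 := rfl
theorem Zl_le : (Zl hn : ℕ) ≤ n - 2 := Nat.zero_le _

theorem mid_ne_Zl {k : Fin n} (h : 1 ≤ (k : ℕ)) : k ≠ Zl hn := by
  intro hc; rw [hc] at h; simp [Zl_val] at h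

theorem mid_ne_El {k : Fin n} (h : (k : ℕ) ≤ n - 2) : k ≠ El hn := by
  intro hc; rw [hc] at h; rw [El_val] at h; omega

variable {x0 xl : Γ n}

/-- `x_{0@0}`, i.e. `x0` localized to the cone at `0`, as a word in `x0` and `x_{n-1}`. -/
theorem Isg0 (h0 : IsX0 n hn x0) (hl : IsXLast n hn x0 xl) :
    IsPrefixMap [Zl hn] x0 (x0⁻¹ * xl⁻¹ * x0 * x0) := by
  obtain ⟨x0Zk, x0ZE, x0mid, x0E⟩ := h0
  obtain ⟨xlle, xlE⟩ := hl
  have x0i_le : ∀ (k : Fin n), (k : ℕ) ≤ n - 2 → ∀ σ,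
      x0⁻¹ (cons k σ) = cons (Zl hn) (cons k σ) := fun k hk σ => inv_apply_eq_iff (x0Zk k hk σ)
  have x0iE0 : ∀ σ, x0⁻¹ (cons (El hn) (cons (Zl hn) σ)) = cons (Zl hn) (cons (El hn) σ) :=
    fun σ => inv_apply_eq_iff (x0ZE σ)
  have x0iEk : ∀ (k : Fin n), 1 ≤ (k : ℕ) → (k : ℕ) ≤ n - 2 → ∀ σ,
      x0⁻¹ (cons (El hn) (cons k σ)) = cons k σ :=
    fun k h1 h2 σ => inv_apply_eq_iff (x0mid k h1 h2 σ)
  have x0iEE : ∀ σ, x0⁻¹ (cons (El hn) (cons (El hn) σ)) = cons (El hn) σ :=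
    fun σ => inv_apply_eq_iff (x0E σ)
  have xliE : ∀ η, xl⁻¹ (cons (El hn) η) = cons (El hn) (x0⁻¹ η) :=
    fun η => inv_apply_eq_iff (by rw [xlE, apply_inv_apply])
  have xlile : ∀ (k : Fin n), (k : ℕ) ≤ n - 2 → ∀ η, xl⁻¹ (cons k η) = cons k η :=
    fun k hk η => inv_apply_eq_iff (xlle k hk η)
  refine pm1_intro ?_ ?_
  · intro η
    show x0⁻¹ (xl⁻¹ (x0 (x0 (cons (Zl hn) η)))) = cons (Zl hn) (x0 η)
    obtain ⟨b, τ, rfl⟩ := exists_cons η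
    rcases fin_cases3 hn b with hb | hb | hb
    · subst hb
      rw [x0Zk (Zl hn) (Zl_le hn)]
      obtain ⟨c, ρ, rfl⟩ := exists_cons τ
      rcases fin_cases2 hn c with hc | hc
      · rw [x0Zk c hc, xlile c hc, x0i_le c hc]
      · subst hc
        rw [x0ZE, xliE, x0i_le (Zl hn) (Zl_le hn), x0iE0]
    · rw [x0Zk b hb.2, x0mid b hb.1 hb.2, xliE, x0i_le b hb.2, x0iE0]
    · subst hb
      rw [x0ZE, x0E, xliE, x0iE0, x0iE0, x0E]
  · intro b hb σ
    show x0⁻¹ (xl⁻¹ (x0 (x0 (cons b σ)))) = cons b σ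
    rcases fin_cases3 hn b with hb0 | hbm | hbE
    · exact absurd hb0 hb
    · rw [x0mid b hbm.1 hbm.2, x0E, xliE, x0iEk b hbm.1 hbm.2, x0iEk b hbm.1 hbm.2]
    · subst hbE
      rw [x0E, x0E, xliE, x0iEE, x0iEE]

end Aux3

section Aux4
variable {n : ℕ} (hn : 2 ≤ n) {x0 xl ycore y0 Y1 Y2 g0 : Γ n}

theorem hf1_lem (h0 : IsX0 n hn x0) (hl : IsXLast n hn x0 xl) :
    ∀ η, xl (wcons [El hn, Zl hn, Zl hn] η) = wcons [El hn, Zl hn] η := by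
  intro η
  rw [wcons_three, wcons_two, hl.2, h0.1 (Zl hn) (Zl_le hn)]

theorem hf2_lem (h0 : IsX0 n hn x0) (hg0 : IsPrefixMap [Zl hn] x0 g0) :
    ∀ η, (x0 * g0⁻¹ * x0⁻¹) (wcons [El hn, Zl hn, El hn] η) = wcons [El hn, Zl hn] η := by
  intro η
  have hg0i := pm_inv hg0
  have g0ia : ∀ σ, g0⁻¹ (cons (Zl hn) σ) = cons (Zl hn) (x0⁻¹ σ) := by
    intro σ; simpa using hg0i.1 σ
  have x0iE0 : ∀ σ, x0⁻¹ (cons (El hn) (cons (Zl hn) σ)) = cons (Zl hn) (cons (El hn) σ) :=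
    fun σ => inv_apply_eq_iff (h0.2.1 σ)
  have x0iEE : ∀ σ, x0⁻¹ (cons (El hn) (cons (El hn) σ)) = cons (El hn) σ :=
    fun σ => inv_apply_eq_iff (h0.2.2.2 σ)
  show x0 (g0⁻¹ (x0⁻¹ (cons (El hn) (cons (Zl hn) (cons (El hn) η))))) =
    cons (El hn) (cons (Zl hn) η)
  rw [x0iE0, g0ia, x0iEE, h0.2.1]

/-- the main conjugation identity : `y0⁻¹ x0 y0 = Y2 ∘ Y1⁻¹ ∘ x0 ∘ g0`. -/
theorem hmain (h0 : IsX0 n hn x0) (hy : IsY n hn ycore)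
    (hy0 : IsPrefixMap [Zl hn] ycore y0)
    (hY1 : IsPrefixMap [El hn, Zl hn, Zl hn] ycore Y1)
    (hY2 : IsPrefixMap [El hn, Zl hn, El hn] ycore Y2)
    (hg0 : IsPrefixMap [Zl hn] x0 g0) :
    y0⁻¹ * x0 * y0 = Y2 * Y1⁻¹ * x0 * g0 := by
  obtain ⟨x0Zk, x0ZE, x0mid, x0E⟩ := h0
  obtain ⟨yZZ, yZk, yk, yZE, yE⟩ := hy
  have hy0i := pm_inv hy0
  have hY1i := pm_inv hY1
  have y0a : ∀ η, y0 (cons (Zl hn) η) = cons (Zl hn) (ycore η) := by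
    intro η; simpa using hy0.1 η
  have y0ia : ∀ η, y0⁻¹ (cons (Zl hn) η) = cons (Zl hn) (ycore⁻¹ η) := by
    intro η; simpa using hy0i.1 η
  have g0a : ∀ η, g0 (cons (Zl hn) η) = cons (Zl hn) (x0 η) := by
    intro η; simpa using hg0.1 η
  have Y1ia : ∀ η, Y1⁻¹ (cons (El hn) (cons (Zl hn) (cons (Zl hn) η))) =
      cons (El hn) (cons (Zl hn) (cons (Zl hn) (ycore⁻¹ η))) := by
    intro η; simpa using hY1i.1 η
  have Y2a : ∀ η, Y2 (cons (El hn) (cons (Zl hn) (cons (El hn) η))) =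
      cons (El hn) (cons (Zl hn) (cons (El hn) (ycore η))) := by
    intro η; simpa using hY2.1 η
  refine Homeomorph.ext fun ξ => ?_
  obtain ⟨a, σ, rfl⟩ := exists_cons ξ
  show y0⁻¹ (x0 (y0 (cons a σ))) = Y2 (Y1⁻¹ (x0 (g0 (cons a σ))))
  rcases fin_cases3 hn a with ha | ha | ha
  · subst ha
    obtain ⟨b, τ, rfl⟩ := exists_cons σ
    rcases fin_cases3 hn b with hb | hb | hb
    · subst hb
      obtain ⟨c, ρ, rfl⟩ := exists_cons τ
      rcases fin_cases3 hn c with hc | hc | hc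
      · subst hc
        rw [y0a, yZZ, x0Zk (Zl hn) (Zl_le hn), y0ia, inv_apply_apply,
          g0a, x0Zk (Zl hn) (Zl_le hn), x0Zk (Zl hn) (Zl_le hn),
          pm3_fix1 hY1i (Zl_ne_El hn), pm3_fix1 hY2 (Zl_ne_El hn)]
      · rw [y0a, yZk c hc.1 hc.2, x0Zk c hc.2,
          pm1_fix hy0i (mid_ne_Zl hn hc.1),
          g0a, x0Zk c hc.2, x0Zk c hc.2,
          pm3_fix1 hY1i (mid_ne_El hn hc.2), pm3_fix1 hY2 (mid_ne_El hn hc.2)]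
      · subst hc
        rw [y0a, yZE, x0ZE, pm1_fix hy0i (El_ne_Zl hn),
          g0a, x0ZE, x0ZE, Y1ia, pm3_fix3 hY2 (Zl_ne_El hn)]
    · rw [y0a, yk b hb.1 hb.2, x0ZE, pm1_fix hy0i (El_ne_Zl hn),
        g0a, x0mid b hb.1 hb.2, x0ZE,
        pm3_fix3 hY1i (mid_ne_Zl hn hb.1), pm3_fix3 hY2 (mid_ne_El hn hb.2)]
    · subst hb
      rw [y0a, yE, x0ZE, pm1_fix hy0i (El_ne_Zl hn),
        g0a, x0E, x0ZE, pm3_fix3 hY1i (El_ne_Zl hn), Y2a]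
  · rw [pm1_fix hy0 (mid_ne_Zl hn ha.1), x0mid a ha.1 ha.2, pm1_fix hy0i (El_ne_Zl hn),
      pm1_fix hg0 (mid_ne_Zl hn ha.1), x0mid a ha.1 ha.2,
      pm3_fix2 hY1i (mid_ne_Zl hn ha.1), pm3_fix2 hY2 (mid_ne_Zl hn ha.1)]
  · subst ha
    rw [pm1_fix hy0 (El_ne_Zl hn), x0E, pm1_fix hy0i (El_ne_Zl hn),
      pm1_fix hg0 (El_ne_Zl hn), x0E,
      pm3_fix2 hY1i (El_ne_Zl hn), pm3_fix2 hY2 (El_ne_Zl hn)]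

/-- disjoint support commuting with `y0`. -/
theorem conj_y0_eq (hy0 : IsPrefixMap [Zl hn] ycore y0) {w : Γ n}
    (H1 : ∀ σ, w (cons (Zl hn) σ) = cons (Zl hn) σ)
    (H2 : ∀ a : Fin n, a ≠ Zl hn → ∀ σ, ∃ b τ, b ≠ Zl hn ∧ w (cons a σ) = cons b τ) :
    y0⁻¹ * w * y0 = w := by
  have y0a : ∀ η, y0 (cons (Zl hn) η) = cons (Zl hn) (ycore η) := by
    intro η; simpa using hy0.1 η
  have hy0i := pm_inv hy0
  have y0ia : ∀ η, y0⁻¹ (cons (Zl hn) η) = cons (Zl hn) (ycore⁻¹ η) := by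
    intro η; simpa using hy0i.1 η
  refine Homeomorph.ext fun ξ => ?_
  obtain ⟨a, σ, rfl⟩ := exists_cons ξ
  show y0⁻¹ (w (y0 (cons a σ))) = w (cons a σ)
  by_cases ha : a = Zl hn
  · subst ha
    rw [y0a, H1, y0ia, inv_apply_apply, H1]
  · obtain ⟨b, τ, hb, hw⟩ := H2 a ha σ
    rw [pm1_fix hy0 ha, hw, pm1_fix hy0i hb]

end Aux4

section Aux5
variable {n : ℕ} (hn : 2 ≤ n) {x0 xl xj ycore y0 : Γ n}

theorem zb_one (s : C n) : zb hn 1 s = cons (Zl hn) s := by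
  rw [show (1 : ℕ) = 0 + 1 from rfl, zb_succ, zb_zero]

theorem zb_two (s : C n) : zb hn 2 s = cons (Zl hn) (cons (Zl hn) s) := by
  rw [show (2 : ℕ) = 1 + 1 from rfl, zb_succ, zb_one]

-- support lemmas for the generators other than `x0`
theorem Hmid1 {j : Fin n} (h1j : 1 ≤ (j : ℕ)) (hj : IsXMid n hn j xj) :
    ∀ σ, xj (cons (Zl hn) σ) = cons (Zl hn) σ :=
  fun σ => hj.1 (Zl hn) (lt_of_lt_of_le Nat.zero_lt_one h1j) σ

theorem Hmid2 {j : Fin n} (h1j : 1 ≤ (j : ℕ)) (h2j : (j : ℕ) ≤ n - 2) (hj : IsXMid n hn j xj) :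
    ∀ a : Fin n, a ≠ Zl hn → ∀ σ, ∃ b τ, b ≠ Zl hn ∧ xj (cons a σ) = cons b τ := by
  intro a ha σ
  rcases lt_trichotomy (a : ℕ) (j : ℕ) with h | h | h
  · exact ⟨a, σ, ha, hj.1 a h σ⟩
  · have haj : a = j := Fin.ext h
    subst haj
    obtain ⟨c, τ, rfl⟩ := exists_cons σ
    by_cases hle : (a : ℕ) + (c : ℕ) ≤ n - 2
    · refine ⟨⟨(a : ℕ) + (c : ℕ), by omega⟩, τ,
        mid_ne_Zl hn (show (1 : ℕ) ≤ (a : ℕ) + (c : ℕ) by omega),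
        hj.2.1 c ⟨(a : ℕ) + (c : ℕ), by omega⟩ rfl hle τ⟩
    · have hge : n - 1 ≤ (a : ℕ) + (c : ℕ) := by omega
      refine ⟨El hn, cons ⟨(a : ℕ) + (c : ℕ) - (n - 1), by have := c.isLt; omega⟩ τ,
        El_ne_Zl hn, hj.2.2.1 c _ hge rfl τ⟩
  · rcases fin_cases2 hn a with h2 | h2
    · exact ⟨El hn, cons a σ, El_ne_Zl hn, hj.2.2.2.1 a h h2 σ⟩
    · subst h2
      exact ⟨El hn, cons (El hn) σ, El_ne_Zl hn, hj.2.2.2.2 σ⟩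

theorem Hl1 (hl : IsXLast n hn x0 xl) : ∀ σ, xl (cons (Zl hn) σ) = cons (Zl hn) σ :=
  fun σ => hl.1 (Zl hn) (Zl_le hn) σ

theorem Hl2 (hl : IsXLast n hn x0 xl) :
    ∀ a : Fin n, a ≠ Zl hn → ∀ σ, ∃ b τ, b ≠ Zl hn ∧ xl (cons a σ) = cons b τ := by
  intro a ha σ
  rcases fin_cases2 hn a with h2 | h2
  · exact ⟨a, σ, ha, hl.1 a h2 σ⟩
  · subst h2
    exact ⟨El hn, x0 σ, El_ne_Zl hn, hl.2 σ⟩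

theorem Hpm2_1 {c f : Γ n} (h : IsPrefixMap [El hn, Zl hn] c f) :
    ∀ σ, f (cons (Zl hn) σ) = cons (Zl hn) σ :=
  fun σ => pm2_fix1 h (Zl_ne_El hn) σ

theorem Hpm2_2 {c f : Γ n} (h : IsPrefixMap [El hn, Zl hn] c f) :
    ∀ a : Fin n, a ≠ Zl hn → ∀ σ, ∃ b τ, b ≠ Zl hn ∧ f (cons a σ) = cons b τ := by
  intro a ha σ
  by_cases haE : a = El hn
  · subst haE
    obtain ⟨d, τ, rfl⟩ := exists_cons σ
    by_cases hd : d = Zl hn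
    · subst hd
      exact ⟨El hn, cons (Zl hn) (c τ), El_ne_Zl hn, pm2_apply h τ⟩
    · exact ⟨El hn, cons d τ, El_ne_Zl hn, pm2_fix2 h hd τ⟩
  · exact ⟨a, σ, ha, pm2_fix1 h haE σ⟩

theorem Hpm1_1 {c f : Γ n} (h : IsPrefixMap [El hn] c f) :
    ∀ σ, f (cons (Zl hn) σ) = cons (Zl hn) σ :=
  fun σ => pm1_fix h (Zl_ne_El hn) σ

theorem Hpm1_2 {c f : Γ n} (h : IsPrefixMap [El hn] c f) :
    ∀ a : Fin n, a ≠ Zl hn → ∀ σ, ∃ b τ, b ≠ Zl hn ∧ f (cons a σ) = cons b τ := by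
  intro a ha σ
  by_cases haE : a = El hn
  · subst haE
    exact ⟨El hn, c σ, El_ne_Zl hn, by simpa using h.1 σ⟩
  · exact ⟨a, σ, ha, pm1_fix h haE σ⟩

theorem S_of_H1 {w : Γ n} (H1 : ∀ σ, w (cons (Zl hn) σ) = cons (Zl hn) σ) : w ∈ Ssub hn := by
  refine ⟨1, 1, fun η => ?_⟩
  rw [zb_one, H1]

theorem S_x0 (h0 : IsX0 n hn x0) : x0 ∈ Ssub hn := by
  refine ⟨2, 1, fun η => ?_⟩
  rw [zb_two, zb_one, h0.1 (Zl hn) (Zl_le hn)]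

theorem pm1_pow (hy0 : IsPrefixMap [Zl hn] ycore y0) :
    ∀ (m : ℕ) η, (y0 ^ m) (cons (Zl hn) η) = cons (Zl hn) ((ycore ^ m) η) := by
  intro m
  induction m with
  | zero => intro η; simp
  | succ m ih =>
    intro η
    have y0a : y0 (cons (Zl hn) η) = cons (Zl hn) (ycore η) := by simpa using hy0.1 η
    rw [pow_succ, mul_apply, y0a, ih, pow_succ, mul_apply]

theorem notS_y0_pow (hy : IsY n hn ycore) (hy0 : IsPrefixMap [Zl hn] ycore y0)
    {d : ℕ} (hd : 1 ≤ d) : y0 ^ d ∉ Ssub hn := by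
  rintro ⟨k, l, h⟩
  have hshift : ∀ t η, (y0 ^ d) (zb hn (k + t) η) = zb hn (l + t) η := by
    intro t η
    rw [zb_add, h, ← zb_add]
  have h1pow : 1 ≤ 2 ^ d := Nat.one_le_two_pow
  have main : ∀ j : ℕ,
      k + j + 1 = l + (2 ^ d * (k + j) + 1 - k) := by
    intro j
    have hmul : k + j ≤ 2 ^ d * (k + j) := by
      calc k + j = 1 * (k + j) := by ring
      _ ≤ 2 ^ d * (k + j) := Nat.mul_le_mul_right _ h1pow
    have ht : k + (2 ^ d * (k + j) + 1 - k) = 2 ^ d * (k + j) + 1 := by omega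
    refine zb_nu_inj hn ?_
    calc zb hn (k + j + 1) (nuC hn)
        = (y0 ^ d) (zb hn (2 ^ d * (k + j) + 1) (nuC hn)) := by
          rw [zb_succ hn (2 ^ d * (k + j)) (nuC hn), zb_succ hn (k + j),
            pm1_pow hn hy0, ypow_zb hn hy]
      _ = (y0 ^ d) (zb hn (k + (2 ^ d * (k + j) + 1 - k)) (nuC hn)) := by rw [ht]
      _ = zb hn (l + (2 ^ d * (k + j) + 1 - k)) (nuC hn) := hshift _ _
  have e1 := main 0
  have e2 := main 1
  have h2d : 2 ≤ 2 ^ d := by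
    calc 2 = 2 ^ 1 := (pow_one 2).symm
    _ ≤ 2 ^ d := Nat.pow_le_pow_right (by norm_num) hd
  simp only [Nat.add_zero] at e1
  rw [Nat.mul_succ] at e2
  have hmul0 : k ≤ 2 ^ d * k := Nat.le_mul_of_pos_left _ (by omega)
  generalize hM : 2 ^ d * k = M at e1 e2 hmul0
  generalize hP : 2 ^ d = P at e2 h2d
  omega

theorem notS_conj (hy : IsY n hn ycore) (hy0 : IsPrefixMap [Zl hn] ycore y0)
    (h0 : IsX0 n hn x0) : y0 * x0 * y0⁻¹ ∉ Ssub hn := by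
  rintro ⟨k, l, h⟩
  have y0a : ∀ η, y0 (cons (Zl hn) η) = cons (Zl hn) (ycore η) := by
    intro η; simpa using hy0.1 η
  have hy0i := pm_inv hy0
  have y0ia : ∀ η, y0⁻¹ (cons (Zl hn) η) = cons (Zl hn) (ycore⁻¹ η) := by
    intro η; simpa using hy0i.1 η
  have hdir : (y0 * x0 * y0⁻¹) (zb hn (k + 2) (nuC hn)) = zb hn (k + 1) (muC hn) := by
    show y0 (x0 (y0⁻¹ (zb hn (k + 2) (nuC hn)))) = zb hn (k + 1) (muC hn)
    have s1 : y0⁻¹ (zb hn (k + 2) (nuC hn)) = zb hn (2 * (k + 1) + 1) (nuC hn) := by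
      rw [show k + 2 = (k + 1) + 1 from rfl, zb_succ, y0ia, yinv_zb_even hn hy,
        show 2 * (k + 1) + 1 = (2 * (k + 1)) + 1 from rfl, zb_succ]
    have s2 : x0 (zb hn (2 * (k + 1) + 1) (nuC hn)) = zb hn (2 * k + 2) (nuC hn) := by
      rw [show 2 * (k + 1) + 1 = (2 * k + 1) + 1 + 1 from by ring, zb_succ, zb_succ,
        h0.1 (Zl hn) (Zl_le hn)]
    have s3 : y0 (zb hn (2 * k + 2) (nuC hn)) = zb hn (k + 1) (muC hn) := by
      rw [show 2 * k + 2 = (2 * k + 1) + 1 from rfl, zb_succ, y0a, y_zb_odd hn hy, zb_succ]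
    rw [s1, s2, s3]
  have hvia : (y0 * x0 * y0⁻¹) (zb hn (k + 2) (nuC hn)) = zb hn (l + 2) (nuC hn) := by
    rw [zb_add, h, ← zb_add]
  exact zb_mu_ne_zb_nu hn (k + 1) (l + 2) (hdir.symm.trans hvia)

end Aux5

section HNNTop
open HNNExtension
variable {G : Type*} [Group G] {B : Subgroup G} {φ : (⊤ : Subgroup G) ≃* B}

private def cmap (φ : (⊤ : Subgroup G) ≃* B) : G → G :=
  fun g => ((φ ⟨g, Subgroup.mem_top g⟩ : B) : G)

theorem t_mul_of_top (g : G) :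
    (t : HNNExtension G ⊤ B φ) * of g = of (cmap φ g) * t :=
  HNNExtension.t_mul_of ⟨g, Subgroup.mem_top g⟩

theorem tpow_mul_of (m : ℕ) : ∀ g : G,
    (t : HNNExtension G ⊤ B φ) ^ m * of g = of ((cmap φ)^[m] g) * t ^ m := by
  induction m with
  | zero => simp
  | succ m ih =>
    intro g
    rw [pow_succ, mul_assoc, t_mul_of_top, ← mul_assoc, ih, Function.iterate_succ_apply,
      mul_assoc]

theorem of_mul_tpow_inv (m : ℕ) (g : G) :
    of g * ((t : HNNExtension G ⊤ B φ) ^ m)⁻¹ = (t ^ m)⁻¹ * of ((cmap φ)^[m] g) := by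
  have h := tpow_mul_of (φ := φ) m g
  calc of g * ((t : HNNExtension G ⊤ B φ) ^ m)⁻¹
      = (t ^ m)⁻¹ * (t ^ m * of g) * (t ^ m)⁻¹ := by group
    _ = (t ^ m)⁻¹ * (of ((cmap φ)^[m] g) * t ^ m) * (t ^ m)⁻¹ := by rw [h]
    _ = (t ^ m)⁻¹ * of ((cmap φ)^[m] g) := by group

theorem hnn_top_nf (x : HNNExtension G ⊤ B φ) :
    ∃ (p q : ℕ) (g : G), x = ((t : HNNExtension G ⊤ B φ) ^ p)⁻¹ * of g * t ^ q := by
  induction x using HNNExtension.induction_on with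
  | of g => exact ⟨0, 0, g, by simp⟩
  | t => exact ⟨0, 1, 1, by simp⟩
  | inv x hx =>
    obtain ⟨p, q, g, rfl⟩ := hx
    exact ⟨q, p, g⁻¹, by simp [mul_assoc, map_inv]⟩
  | mul x y hx hy =>
    obtain ⟨p, q, g, rfl⟩ := hx
    obtain ⟨P, Q, G', rfl⟩ := hy
    rcases le_or_gt P q with hPq | hPq
    · refine ⟨p, q - P + Q, g * (cmap φ)^[q - P] G', ?_⟩
      have e1 : (t : HNNExtension G ⊤ B φ) ^ q = t ^ (q - P) * t ^ P := by
        rw [← pow_add]; congr 1; omega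
      rw [e1, map_mul, pow_add]
      calc (t ^ p)⁻¹ * of g * (t ^ (q - P) * t ^ P) * ((t ^ P)⁻¹ * of G' * t ^ Q)
          = (t ^ p)⁻¹ * of g * (t ^ (q - P) * of G') * t ^ Q := by group
        _ = (t ^ p)⁻¹ * of g * (of ((cmap φ)^[q - P] G') * t ^ (q - P)) * t ^ Q := by
            rw [tpow_mul_of]
        _ = (t ^ p)⁻¹ * (of g * of ((cmap φ)^[q - P] G')) * (t ^ (q - P) * t ^ Q) := by
            group
    · refine ⟨P - q + p, Q, (cmap φ)^[P - q] g * G', ?_⟩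
      have e1 : ((t : HNNExtension G ⊤ B φ) ^ P)⁻¹ = (t ^ q)⁻¹ * (t ^ (P - q))⁻¹ := by
        rw [← mul_inv_rev, ← pow_add]; congr 2; omega
      have e2 : ((t : HNNExtension G ⊤ B φ) ^ (P - q + p))⁻¹ =
          (t ^ p)⁻¹ * (t ^ (P - q))⁻¹ := by
        rw [← mul_inv_rev, ← pow_add]
      have e3 := of_mul_tpow_inv (φ := φ) (P - q) g
      rw [e1, e2, map_mul]
      calc (t ^ p)⁻¹ * of g * t ^ q * ((t ^ q)⁻¹ * (t ^ (P - q))⁻¹ * of G' * t ^ Q)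
          = (t ^ p)⁻¹ * ((of g * (t ^ (P - q))⁻¹) * of G') * t ^ Q := by group
        _ = (t ^ p)⁻¹ * (((t ^ (P - q))⁻¹ * of ((cmap φ)^[P - q] g)) * of G') * t ^ Q := by
            rw [e3]
        _ = (t ^ p)⁻¹ * (t ^ (P - q))⁻¹ * (of ((cmap φ)^[P - q] g) * of G') * t ^ Q := by
            group
  end HNNTop

section Package
variable {Γ' : Type*} [Group Γ']

/-- conjugation by `u⁻¹` as a homomorphism `Gy →* Gy`. -/
def conjHom (Gy : Subgroup Γ') (u : Γ') (hconj : ∀ w ∈ Gy, u⁻¹ * w * u ∈ Gy) :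
    ↥Gy →* ↥Gy :=
  MonoidHom.mk' (fun g => ⟨u⁻¹ * ↑g * u, hconj _ g.2⟩)
    (fun a b => Subtype.ext (by
      show u⁻¹ * ↑(a * b) * u = (u⁻¹ * ↑a * u) * (u⁻¹ * ↑b * u)
      rw [Subgroup.coe_mul]
      group))

theorem conjHom_coe (Gy : Subgroup Γ') (u : Γ') (hconj : ∀ w ∈ Gy, u⁻¹ * w * u ∈ Gy)
    (g : ↥Gy) : (conjHom Gy u hconj g : Γ') = u⁻¹ * ↑g * u := rfl

theorem conjHom_inj (Gy : Subgroup Γ') (u : Γ') (hconj : ∀ w ∈ Gy, u⁻¹ * w * u ∈ Gy) :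
    Function.Injective (conjHom Gy u hconj) := by
  intro a b hab
  have h2 : u⁻¹ * ↑a * u = u⁻¹ * ↑b * u := by
    have := Subtype.ext_iff.mp hab
    simpa [conjHom_coe] using this
  exact Subtype.ext (mul_left_cancel (mul_right_cancel h2))

theorem hnn_package (Gy yGy S : Subgroup Γ') (u : Γ')
    (hGyS : Gy ≤ S) (hGyle : Gy ≤ yGy) (hu : u ∈ yGy)
    (hconj : ∀ w ∈ Gy, u⁻¹ * w * u ∈ Gy)
    (hupow : ∀ d : ℕ, 1 ≤ d → u ^ d ∉ S)
    (hclos : Subgroup.closure ((Gy : Set Γ') ∪ {u⁻¹}) = yGy) :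
    ∃ (B : Subgroup ↥Gy) (φ : (⊤ : Subgroup ↥Gy) ≃* B),
      (∀ a : (⊤ : Subgroup ↥Gy), ((φ a : ↥Gy) : Γ') = u⁻¹ * ((a : ↥Gy) : Γ') * (u⁻¹)⁻¹) ∧
      ∃ f : HNNExtension ↥Gy ⊤ B φ →* Γ',
        (∀ h : ↥Gy, f (HNNExtension.of h) = (h : Γ')) ∧
        f HNNExtension.t = u⁻¹ ∧
        Function.Injective f ∧ f.range = yGy := by
  classical
  refine ⟨(conjHom Gy u hconj).range,
    Subgroup.topEquiv.trans (MonoidHom.ofInjective (conjHom_inj Gy u hconj)), ?_, ?_⟩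
  · intro a
    rw [inv_inv]
    have h1 : ((Subgroup.topEquiv.trans
        (MonoidHom.ofInjective (conjHom_inj Gy u hconj))) a : ↥Gy) =
        conjHom Gy u hconj ↑a := by
      rw [MulEquiv.trans_apply, MonoidHom.ofInjective_apply]
      rfl
    rw [h1, conjHom_coe]
  · have hrel : ∀ a : (⊤ : Subgroup ↥Gy),
        u⁻¹ * Gy.subtype ↑a = Gy.subtype ↑((Subgroup.topEquiv.trans
          (MonoidHom.ofInjective (conjHom_inj Gy u hconj))) a) * u⁻¹ := by
      intro a
      have h1 : ((Subgroup.topEquiv.trans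
          (MonoidHom.ofInjective (conjHom_inj Gy u hconj))) a : ↥Gy) =
          conjHom Gy u hconj ↑a := by
        rw [MulEquiv.trans_apply, MonoidHom.ofInjective_apply]
        rfl
      rw [h1]
      show u⁻¹ * ↑↑a = ↑(conjHom Gy u hconj ↑a) * u⁻¹
      rw [conjHom_coe]
      group
    refine ⟨HNNExtension.lift Gy.subtype u⁻¹ hrel,
      fun h => HNNExtension.lift_of _ _ _ h, HNNExtension.lift_t _ _ _, ?_, ?_⟩
    · -- injectivity
      set f := HNNExtension.lift Gy.subtype u⁻¹ hrel with hfdef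
      have hft : f HNNExtension.t = u⁻¹ := HNNExtension.lift_t _ _ _
      have hfof : ∀ h : ↥Gy, f (HNNExtension.of h) = (h : Γ') :=
        fun h => HNNExtension.lift_of _ _ _ h
      have hker : ∀ w, f w = 1 → w = 1 := by
        intro w hw
        obtain ⟨p, q, g, rfl⟩ := hnn_top_nf w
        rw [map_mul, map_mul, map_inv, map_pow, map_pow, hft, hfof] at hw
        have hg : (g : Γ') = (u⁻¹) ^ p * ((u⁻¹) ^ q)⁻¹ := by
          calc (g : Γ')
              = (u⁻¹) ^ p * (((u⁻¹) ^ p)⁻¹ * ↑g * (u⁻¹) ^ q) * ((u⁻¹) ^ q)⁻¹ := by group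
            _ = (u⁻¹) ^ p * 1 * ((u⁻¹) ^ q)⁻¹ := by rw [hw]
            _ = (u⁻¹) ^ p * ((u⁻¹) ^ q)⁻¹ := by group
        have hg2 : (g : Γ') = (u ^ p)⁻¹ * u ^ q := by
          rw [hg, inv_pow, inv_pow, inv_inv]
        rcases lt_trichotomy p q with hpq | hpq | hpq
        · exfalso
          have he : (g : Γ') = u ^ (q - p) := by
            rw [hg2, show q = p + (q - p) from by omega, pow_add]
            group
            congr 1
            omega
          exact hupow (q - p) (by omega) (he ▸ hGyS g.2)
        · have hone : (g : Γ') = 1 := by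
            rw [hg2, hpq]
            group
          have hg1 : g = 1 := Subtype.ext hone
          rw [hg1, map_one, mul_one, hpq, inv_mul_cancel]
        · exfalso
          have he : ((g : Γ'))⁻¹ = u ^ (p - q) := by
            rw [hg2, show p = q + (p - q) from by omega, pow_add]
            group
            congr 1
            omega
          exact hupow (p - q) (by omega) (he ▸ hGyS (inv_mem g.2))
      intro a b hab
      have h1 : f (a * b⁻¹) = 1 := by
        rw [map_mul, map_inv, hab]
        group
      exact mul_inv_eq_one.mp (hker _ h1)
    · -- range
      set f := HNNExtension.lift Gy.subtype u⁻¹ hrel with hfdef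
      have hft : f HNNExtension.t = u⁻¹ := HNNExtension.lift_t _ _ _
      have hfof : ∀ h : ↥Gy, f (HNNExtension.of h) = (h : Γ') :=
        fun h => HNNExtension.lift_of _ _ _ h
      apply le_antisymm
      · rintro v ⟨w, rfl⟩
        obtain ⟨p, q, g, rfl⟩ := hnn_top_nf w
        rw [map_mul, map_mul, map_inv, map_pow, map_pow, hft, hfof]
        exact mul_mem (mul_mem (inv_mem (pow_mem (inv_mem hu) p)) (hGyle g.2))
          (pow_mem (inv_mem hu) q)
      · rw [← hclos]
        apply (Subgroup.closure_le _).mpr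
        rintro v (hv | hv)
        · exact ⟨HNNExtension.of ⟨v, hv⟩, hfof _⟩
        · rw [Set.mem_singleton_iff] at hv
          subst hv
          exact ⟨HNNExtension.t, hft⟩
end Package

theorem yGy_HNN_over_Gy
    (n : ℕ) (hn : 2 ≤ n) (x : Fin n → Γ n) (hx : IsXFamily n hn x)
    (ycore : Γ n) (hy : IsY n hn ycore)
    (y10 : Γ n) (hy10 : IsPrefixMap [⟨n - 1, by omega⟩, ⟨0, by omega⟩] ycore y10)
    (y0 : Γ n) (hy0 : IsPrefixMap [⟨0, by omega⟩] ycore y0)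
    (y1 : Γ n) (hy1 : IsPrefixMap [⟨n - 1, by omega⟩] ycore y1)
    (Gy : Subgroup (Γ n)) (hGy : Gy = Subgroup.closure (Set.range x ∪ {y10, y1}))
    (yGy : Subgroup (Γ n)) (hyGy : yGy = Subgroup.closure (Set.range x ∪ {y10, y0, y1})) :
    Subgroup.closure ((Gy : Set (Γ n)) ∪ {y0⁻¹}) = yGy ∧
    Gy.map (MulAut.conj (y0⁻¹)).toMonoidHom < Gy ∧
    ∃ (B : Subgroup ↥Gy) (φ : (⊤ : Subgroup ↥Gy) ≃* B),
      (∀ a : (⊤ : Subgroup ↥Gy),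
        ((φ a : ↥Gy) : Γ n) = y0⁻¹ * ((a : ↥Gy) : Γ n) * (y0⁻¹)⁻¹) ∧
      ∃ f : HNNExtension ↥Gy ⊤ B φ →* Γ n,
        (∀ h : ↥Gy, f (HNNExtension.of h) = (h : Γ n)) ∧
        f HNNExtension.t = y0⁻¹ ∧
        Function.Injective f ∧ f.range = yGy := by
  obtain ⟨h0, hmidf, hlf⟩ := hx
  have hxjGy : ∀ j : Fin n, x j ∈ Gy := fun j => by
    rw [hGy]; exact Subgroup.subset_closure (Or.inl ⟨j, rfl⟩)
  have hy10Gy : y10 ∈ Gy := by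
    rw [hGy]; exact Subgroup.subset_closure (Or.inr (Set.mem_insert _ _))
  have hy1Gy : y1 ∈ Gy := by
    rw [hGy]; exact Subgroup.subset_closure (Or.inr (Set.mem_insert_of_mem _ rfl))
  have hGyS : Gy ≤ Ssub hn := by
    rw [hGy]
    apply (Subgroup.closure_le _).mpr
    rintro w hw
    rcases hw with ⟨j, rfl⟩ | hw
    · rcases fin_cases3 hn j with hj | hj | hj
      · subst hj; exact S_x0 hn h0
      · exact S_of_H1 hn (Hmid1 hn hj.1 (hmidf j hj.1 hj.2))
      · subst hj; exact S_of_H1 hn (Hl1 hn hlf)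
    · simp only [Set.mem_insert_iff, Set.mem_singleton_iff] at hw
      rcases hw with rfl | rfl
      · exact S_of_H1 hn (Hpm2_1 hn hy10)
      · exact S_of_H1 hn (Hpm1_1 hn hy1)
  have hg0 : IsPrefixMap [Zl hn] (x ⟨0, by omega⟩) ((x ⟨0, by omega⟩)⁻¹ * (x ⟨n - 1, by omega⟩)⁻¹ * (x ⟨0, by omega⟩) * (x ⟨0, by omega⟩)) := Isg0 hn h0 hlf
  have hY1 : IsPrefixMap [El hn, Zl hn, Zl hn] ycore ((x ⟨n - 1, by omega⟩)⁻¹ * y10 * (x ⟨n - 1, by omega⟩)) :=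
    pm_conj (hf1_lem hn h0 hlf) hy10
  have hY2 : IsPrefixMap [El hn, Zl hn, El hn] ycore (((x ⟨0, by omega⟩) * ((x ⟨0, by omega⟩)⁻¹ * (x ⟨n - 1, by omega⟩)⁻¹ * (x ⟨0, by omega⟩) * (x ⟨0, by omega⟩))⁻¹ * (x ⟨0, by omega⟩)⁻¹)⁻¹ * y10 * ((x ⟨0, by omega⟩) * ((x ⟨0, by omega⟩)⁻¹ * (x ⟨n - 1, by omega⟩)⁻¹ * (x ⟨0, by omega⟩) * (x ⟨0, by omega⟩))⁻¹ * (x ⟨0, by omega⟩)⁻¹)) :=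
    pm_conj (hf2_lem hn h0 hg0) hy10
  have hconjx0 : y0⁻¹ * (x ⟨0, by omega⟩) * y0 = (((x ⟨0, by omega⟩) * ((x ⟨0, by omega⟩)⁻¹ * (x ⟨n - 1, by omega⟩)⁻¹ * (x ⟨0, by omega⟩) * (x ⟨0, by omega⟩))⁻¹ * (x ⟨0, by omega⟩)⁻¹)⁻¹ * y10 * ((x ⟨0, by omega⟩) * ((x ⟨0, by omega⟩)⁻¹ * (x ⟨n - 1, by omega⟩)⁻¹ * (x ⟨0, by omega⟩) * (x ⟨0, by omega⟩))⁻¹ * (x ⟨0, by omega⟩)⁻¹)) * ((x ⟨n - 1, by omega⟩)⁻¹ * y10 * (x ⟨n - 1, by omega⟩))⁻¹ * (x ⟨0, by omega⟩) * ((x ⟨0, by omega⟩)⁻¹ * (x ⟨n - 1, by omega⟩)⁻¹ * (x ⟨0, by omega⟩) * (x ⟨0, by omega⟩)) :=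
    hmain hn h0 hy hy0 hY1 hY2 hg0
  have hG0Gy : ((x ⟨0, by omega⟩)⁻¹ * (x ⟨n - 1, by omega⟩)⁻¹ * (x ⟨0, by omega⟩) * (x ⟨0, by omega⟩)) ∈ Gy :=
    mul_mem (mul_mem (mul_mem (inv_mem (hxjGy _)) (inv_mem (hxjGy _))) (hxjGy _)) (hxjGy _)
  have hY1Gy : ((x ⟨n - 1, by omega⟩)⁻¹ * y10 * (x ⟨n - 1, by omega⟩)) ∈ Gy := mul_mem (mul_mem (inv_mem (hxjGy _)) hy10Gy) (hxjGy _)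
  have hF2Gy : ((x ⟨0, by omega⟩) * ((x ⟨0, by omega⟩)⁻¹ * (x ⟨n - 1, by omega⟩)⁻¹ * (x ⟨0, by omega⟩) * (x ⟨0, by omega⟩))⁻¹ * (x ⟨0, by omega⟩)⁻¹) ∈ Gy := mul_mem (mul_mem (hxjGy _) (inv_mem hG0Gy)) (inv_mem (hxjGy _))
  have hY2Gy : (((x ⟨0, by omega⟩) * ((x ⟨0, by omega⟩)⁻¹ * (x ⟨n - 1, by omega⟩)⁻¹ * (x ⟨0, by omega⟩) * (x ⟨0, by omega⟩))⁻¹ * (x ⟨0, by omega⟩)⁻¹)⁻¹ * y10 * ((x ⟨0, by omega⟩) * ((x ⟨0, by omega⟩)⁻¹ * (x ⟨n - 1, by omega⟩)⁻¹ * (x ⟨0, by omega⟩) * (x ⟨0, by omega⟩))⁻¹ * (x ⟨0, by omega⟩)⁻¹)) ∈ Gy := mul_mem (mul_mem (inv_mem hF2Gy) hy10Gy) hF2Gy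
  have hconj : ∀ w ∈ Gy, y0⁻¹ * w * y0 ∈ Gy := by
    intro w hw
    rw [hGy] at hw
    induction hw using Subgroup.closure_induction with
    | mem w hw =>
      rcases hw with ⟨j, rfl⟩ | hw
      · rcases fin_cases3 hn j with hj | hj | hj
        · subst hj
          rw [hconjx0]
          exact mul_mem (mul_mem (mul_mem hY2Gy (inv_mem hY1Gy)) (hxjGy _)) hG0Gy
        · rw [conj_y0_eq hn hy0 (Hmid1 hn hj.1 (hmidf j hj.1 hj.2))
            (Hmid2 hn hj.1 hj.2 (hmidf j hj.1 hj.2))]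
          exact hxjGy j
        · subst hj
          rw [conj_y0_eq hn hy0 (Hl1 hn hlf) (Hl2 hn hlf)]
          exact hxjGy _
      · simp only [Set.mem_insert_iff, Set.mem_singleton_iff] at hw
        rcases hw with rfl | rfl
        · rw [conj_y0_eq hn hy0 (Hpm2_1 hn hy10) (Hpm2_2 hn hy10)]
          exact hy10Gy
        · rw [conj_y0_eq hn hy0 (Hpm1_1 hn hy1) (Hpm1_2 hn hy1)]
          exact hy1Gy
    | one =>
      simp only [mul_one, inv_mul_cancel]
      exact one_mem Gy
    | mul a b ha hb hpa hpb =>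
      have h3 : y0⁻¹ * (a * b) * y0 = (y0⁻¹ * a * y0) * (y0⁻¹ * b * y0) := by group
      rw [h3]
      exact mul_mem hpa hpb
    | inv a ha hpa =>
      have h3 : y0⁻¹ * a⁻¹ * y0 = (y0⁻¹ * a * y0)⁻¹ := by group
      rw [h3]
      exact inv_mem hpa
  have hsub : (Set.range x ∪ {y10, y1} : Set (Γ n)) ⊆ Set.range x ∪ {y10, y0, y1} := by
    intro u hu
    simp only [Set.mem_union, Set.mem_insert_iff, Set.mem_singleton_iff] at hu ⊢
    tauto
  have hGyle : Gy ≤ yGy := by rw [hGy, hyGy]; exact Subgroup.closure_mono hsub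
  have hy0yGy : y0 ∈ yGy := by
    rw [hyGy]
    exact Subgroup.subset_closure (Or.inr (Set.mem_insert_of_mem _ (Set.mem_insert _ _)))
  have parta : Subgroup.closure ((Gy : Set (Γ n)) ∪ {y0⁻¹}) = yGy := by
    apply le_antisymm
    · apply (Subgroup.closure_le _).mpr
      rintro u (hu | hu)
      · exact hGyle hu
      · rw [Set.mem_singleton_iff] at hu
        subst hu
        exact inv_mem hy0yGy
    · rw [hyGy]
      apply (Subgroup.closure_le _).mpr
      rintro u (⟨j, rfl⟩ | hu)
      · exact Subgroup.subset_closure (Or.inl (hxjGy j))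
      · simp only [Set.mem_insert_iff, Set.mem_singleton_iff] at hu
        rcases hu with rfl | hu0 | rfl
        · exact Subgroup.subset_closure (Or.inl hy10Gy)
        · rw [hu0]
          have hmem : y0⁻¹ ∈ Subgroup.closure ((Gy : Set (Γ n)) ∪ {y0⁻¹}) :=
            Subgroup.subset_closure (Or.inr rfl)
          simpa using inv_mem hmem
        · exact Subgroup.subset_closure (Or.inl hy1Gy)
  have hble : Gy.map (MulAut.conj (y0⁻¹)).toMonoidHom ≤ Gy := by
    rintro u ⟨g, hg, rfl⟩
    show (MulAut.conj (y0⁻¹)).toMonoidHom g ∈ Gy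
    simp only [MulEquiv.coe_toMonoidHom, MulAut.conj_apply, inv_inv]
    exact hconj g hg
  have hstrict : Gy.map (MulAut.conj (y0⁻¹)).toMonoidHom < Gy := by
    apply lt_of_le_of_ne hble
    intro heq
    have hx0in : (x ⟨0, by omega⟩) ∈ Gy.map (MulAut.conj (y0⁻¹)).toMonoidHom := by
      rw [heq]; exact hxjGy _
    obtain ⟨g, hg, hgx⟩ := hx0in
    simp only [MulEquiv.coe_toMonoidHom, MulAut.conj_apply, inv_inv] at hgx
    have hgeq : g = y0 * (x ⟨0, by omega⟩) * y0⁻¹ := by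
      calc g = y0 * (y0⁻¹ * g * y0) * y0⁻¹ := by group
      _ = y0 * (x ⟨0, by omega⟩) * y0⁻¹ := by rw [hgx]
    exact notS_conj hn hy hy0 h0 (hgeq ▸ hGyS hg)
  obtain ⟨B, φ, hφ, f, hf1, hf2, hf3, hf4⟩ :=
    hnn_package Gy yGy (Ssub hn) y0 hGyS hGyle hy0yGy hconj
      (fun d hd => notS_y0_pow hn hy hy0 hd) parta
  exact ⟨parta, hstrict, B, φ, hφ, f, hf1, hf2, hf3, hf4⟩

end LM
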